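/- Let p ≥ 2 and n ≥ 1 be integers, R > 0, α₁ > 0, τ₁ ≥ 0, β* ∈ ℝ^p, and let L_n : ℝ^p → ℝ be convex and differentiable. Suppose ⟨∇L_n(β* + Δ) − ∇L_n(β*), Δ⟩ ≥ α₁‖Δ‖₂² − τ₁((log p)/n)‖Δ‖₁² for all Δ ∈ ℝ^p with ‖Δ‖₂ ≤ 1 and ‖Δ‖₁ ≤ 2R, and suppose n ≥ 4R²τ₁² log p. Then for all Δ ∈ ℝ^p with ‖Δ‖₂ ≥ 1 and ‖Δ‖₁ ≤ 2R, ⟨∇L_n(β* + Δ) − ∇L_n(β*), Δ⟩ ≥ α₁‖Δ‖₂ − √((log p)/n)·‖Δ‖₁. -/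

import Mathlib

open Finset

noncomputable def l1 {p : ℕ} (x : Fin p → ℝ) : ℝ := ∑ i, |x i|

noncomputable def l2 {p : ℕ} (x : Fin p → ℝ) : ℝ := Real.sqrt (∑ i, (x i) ^ 2)

noncomputable def dot {p : ℕ} (x y : Fin p → ℝ) : ℝ := ∑ i, x i * y i

lemma l1_smul {p : ℕ} (c : ℝ) (x : Fin p → ℝ) : l1 (c • x) = |c| * l1 x := by
  simp [l1, abs_mul, Finset.mul_sum]

lemma l2_smul {p : ℕ} (c : ℝ) (x : Fin p → ℝ) : l2 (c • x) = |c| * l2 x := by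
  simp only [l2, Pi.smul_apply, smul_eq_mul, mul_pow, ← Finset.mul_sum]
  rw [Real.sqrt_mul (sq_nonneg c), Real.sqrt_sq_eq_abs]

lemma l2_nonneg {p : ℕ} (x : Fin p → ℝ) : 0 ≤ l2 x := Real.sqrt_nonneg _

lemma l1_nonneg {p : ℕ} (x : Fin p → ℝ) : 0 ≤ l1 x :=
  Finset.sum_nonneg fun i _ => abs_nonneg _

lemma dot_sub_left {p : ℕ} (x y z : Fin p → ℝ) :
    dot (x - y) z = dot x z - dot y z := by
  simp [dot, sub_mul, Finset.sum_sub_distrib]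

lemma dot_smul_right {p : ℕ} (c : ℝ) (x y : Fin p → ℝ) :
    dot x (c • y) = c * dot x y := by
  simp only [dot, Pi.smul_apply, smul_eq_mul, Finset.mul_sum]
  exact Finset.sum_congr rfl fun i _ => by ring

theorem local_rsc_implies_global_rsc_of_convex
    {p n : ℕ} (hp : 2 ≤ p) (hn : 1 ≤ n)
    (R a1 t1 : ℝ) (hR : 0 < R) (ha1 : 0 < a1) (ht1 : 0 ≤ t1)
    (bstar : Fin p → ℝ)
    (Ln : (Fin p → ℝ) → ℝ) (gradLn : (Fin p → ℝ) → (Fin p → ℝ))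
    (hdiff : ∀ β : Fin p → ℝ, HasFDerivAt Ln
      (∑ i, gradLn β i • (ContinuousLinearMap.proj i : (Fin p → ℝ) →L[ℝ] ℝ)) β)
    (hconv : ConvexOn ℝ Set.univ Ln)
    (hlocal : ∀ Δ : Fin p → ℝ, l2 Δ ≤ 1 → l1 Δ ≤ 2 * R →
      dot (gradLn (bstar + Δ) - gradLn bstar) Δ ≥
        a1 * (l2 Δ) ^ 2 - t1 * (Real.log p / n) * (l1 Δ) ^ 2)
    (hsample : 4 * R ^ 2 * t1 ^ 2 * Real.log p ≤ n) :
    ∀ Δ : Fin p → ℝ, 1 ≤ l2 Δ → l1 Δ ≤ 2 * R →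
      dot (gradLn (bstar + Δ) - gradLn bstar) Δ ≥
        a1 * l2 Δ - Real.sqrt (Real.log p / n) * l1 Δ := by
  intro Δ h2 h1
  have hlogp : 0 ≤ Real.log p := Real.log_nonneg (by exact_mod_cast hp.trans' (by norm_num))
  have hnpos : (0:ℝ) < n := by exact_mod_cast hn
  set q : ℝ := Real.log p / n with hq
  have hq0 : 0 ≤ q := div_nonneg hlogp hnpos.le
  have hs2 : (0:ℝ) < l2 Δ := lt_of_lt_of_le one_pos h2
  set t : ℝ := (l2 Δ)⁻¹ with ht
  have htpos : 0 < t := inv_pos.mpr hs2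
  have ht1' : t ≤ 1 := by
    rw [ht]; exact inv_le_one_of_one_le₀ h2
  -- the 1D function along the line
  set c : ℝ → (Fin p → ℝ) := fun s => bstar + s • Δ with hc
  set g : ℝ → ℝ := fun s => dot (gradLn (c s)) Δ with hg
  have hderiv : ∀ s : ℝ, HasDerivAt (fun s => Ln (c s)) (g s) s := by
    intro s
    have hline : HasDerivAt c Δ s := by
      have : HasDerivAt (fun s : ℝ => s • Δ) ((1:ℝ) • Δ) s :=
        (hasDerivAt_id s).smul_const Δ
      simpa [hc] using this.const_add bstar
    have := (hdiff (c s)).comp_hasDerivAt s hline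
    refine this.congr_deriv ?_
    simp [hg, dot, ContinuousLinearMap.sum_apply]
  -- convexity of the 1D function
  have hφconv : ConvexOn ℝ Set.univ (fun s => Ln (c s)) := by
    set A : ℝ →ᵃ[ℝ] (Fin p → ℝ) := AffineMap.lineMap bstar (bstar + Δ) with hA_def
    have hA := hconv.comp_affineMap A
    have hAs : ∀ s : ℝ, A s = c s := by
      intro s; simp [hA_def, AffineMap.lineMap_apply, hc]; abel
    have hA' : ConvexOn ℝ Set.univ (Ln ∘ A) := by simpa using hA
    exact hA'.congr fun s _ => by rw [Function.comp_apply, hAs]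
  -- monotonicity of g
  have hgmono : Monotone g := by
    have hmono := hφconv.monotoneOn_deriv (fun x _ => (hderiv x).differentiableAt)
    intro a b hab
    have := hmono (Set.mem_univ a) (Set.mem_univ b) hab
    rwa [(hderiv a).deriv, (hderiv b).deriv] at this
  -- local bound at t • Δ
  have hl2t : l2 (t • Δ) = 1 := by
    rw [l2_smul, abs_of_pos htpos, ht, inv_mul_cancel₀ hs2.ne']
  have hl1t : l1 (t • Δ) ≤ 2 * R := by
    calc l1 (t • Δ) = t * l1 Δ := by rw [l1_smul, abs_of_pos htpos]
    _ ≤ 1 * l1 Δ := by apply mul_le_mul_of_nonneg_right ht1' (l1_nonneg Δ)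
    _ ≤ 2 * R := by rw [one_mul]; exact h1
  have hloc := hlocal (t • Δ) (le_of_eq hl2t) hl1t
  rw [hl2t] at hloc
  -- rewrite local bound: dot (grad(bstar + t•Δ) - grad bstar) (t•Δ) = t * (g t - g 0)
  have hrw : dot (gradLn (bstar + t • Δ) - gradLn bstar) (t • Δ) = t * (g t - g 0) := by
    rw [dot_smul_right, dot_sub_left]
    have h0 : c 0 = bstar := by simp [hc]
    have htt : c t = bstar + t • Δ := rfl
    rw [hg]; simp [h0, htt]
  rw [hrw, l1_smul, abs_of_pos htpos] at hloc
  -- so g t - g 0 ≥ a1 * l2 Δ - t1 * q * (l1 Δ)^2 / l2 Δ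
  have key : g t - g 0 ≥ a1 * l2 Δ - t1 * q * (l1 Δ) ^ 2 / l2 Δ := by
    have h' : t * (g t - g 0) ≥ a1 * 1 ^ 2 - t1 * q * (t * l1 Δ) ^ 2 := hloc
    have h2' : g t - g 0 ≥ (a1 - t1 * q * t ^ 2 * (l1 Δ) ^ 2) / t := by
      rw [ge_iff_le, div_le_iff₀ htpos]
      calc a1 - t1 * q * t ^ 2 * (l1 Δ) ^ 2 = a1 * 1 ^ 2 - t1 * q * (t * l1 Δ) ^ 2 := by ring
      _ ≤ t * (g t - g 0) := h'
      _ = (g t - g 0) * t := by ring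
    refine le_trans (le_of_eq ?_) h2'
    rw [ht]
    field_simp
  -- main chain
  have hmain : dot (gradLn (bstar + Δ) - gradLn bstar) Δ = g 1 - g 0 := by
    rw [dot_sub_left, hg]; simp [hc]
  rw [hmain]
  have hg1 : g t - g 0 ≤ g 1 - g 0 := by
    have := hgmono ht1'
    linarith
  -- final: t1 * q * (l1 Δ)^2 / l2 Δ ≤ √q * l1 Δ
  have hfin : t1 * q * (l1 Δ) ^ 2 / l2 Δ ≤ Real.sqrt q * l1 Δ := by
    have step1 : t1 * q * (l1 Δ) ^ 2 / l2 Δ ≤ t1 * q * (l1 Δ) ^ 2 := by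
      apply div_le_self (by positivity) h2
    refine step1.trans ?_
    have hkey : t1 * Real.sqrt q * l1 Δ ≤ 1 := by
      have hsq : (t1 * Real.sqrt q * l1 Δ) ^ 2 ≤ 1 := by
        have h1' : (l1 Δ) ^ 2 ≤ (2 * R) ^ 2 := pow_le_pow_left₀ (l1_nonneg Δ) h1 2
        have heq : t1 ^ 2 * q * (2 * R) ^ 2 = 4 * R ^ 2 * t1 ^ 2 * Real.log p / n := by
          rw [hq]; ring
        have h3 : t1 ^ 2 * q * (2 * R) ^ 2 ≤ 1 := by
          rw [heq]; exact (div_le_one hnpos).mpr hsample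
        calc (t1 * Real.sqrt q * l1 Δ) ^ 2 = t1 ^ 2 * q * (l1 Δ) ^ 2 := by
              rw [mul_pow, mul_pow, Real.sq_sqrt hq0]
        _ ≤ t1 ^ 2 * q * (2 * R) ^ 2 := by
              apply mul_le_mul_of_nonneg_left h1' (by positivity)
        _ ≤ 1 := h3
      nlinarith [mul_nonneg (mul_nonneg ht1 (Real.sqrt_nonneg q)) (l1_nonneg Δ)]
    have hstep := mul_le_mul_of_nonneg_right hkey
      (mul_nonneg (Real.sqrt_nonneg q) (l1_nonneg Δ))
    nlinarith [Real.sq_sqrt hq0, hstep, mul_nonneg ht1 (sq_nonneg (l1 Δ))]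
  linarith
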